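/- Let X be a real normed vector space. For all x, y ∈ X, the supremum over all continuous linear functionals Φ : X → ℝ with ‖Φ‖ ≤ 1 of √(Φ(x)² + Φ(y)²) equals the supremum over t ∈ [0, 2π] of ‖(cos t)·x + (sin t)·y‖. -/

import Mathlib

/-- For a real normed space `X` and `x, y ∈ X`, the supremum over functionals `Φ` in the closed
unit ball of the dual of `√(Φ(x)² + Φ(y)²)` equals the supremum over `t ∈ [0, 2π]` of
`‖(cos t)·x + (sin t)·y‖`. -/
theorem stmt16 (X : Type*) [NormedAddCommGroup X] [NormedSpace ℝ X] (x y : X) :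
    sSup ((fun Φ : X →L[ℝ] ℝ => Real.sqrt (Φ x ^ 2 + Φ y ^ 2)) '' {Φ | ‖Φ‖ ≤ 1}) =
      sSup ((fun t : ℝ => ‖Real.cos t • x + Real.sin t • y‖) '' Set.Icc 0 (2 * Real.pi)) := by
  set A := (fun Φ : X →L[ℝ] ℝ => Real.sqrt (Φ x ^ 2 + Φ y ^ 2)) '' {Φ | ‖Φ‖ ≤ 1} with hA
  set B := (fun t : ℝ => ‖Real.cos t • x + Real.sin t • y‖) '' Set.Icc 0 (2 * Real.pi) with hB
  have hπ := Real.pi_pos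
  have hAne : A.Nonempty := ⟨_, ⟨0, by simp, rfl⟩⟩
  have hBne : B.Nonempty := ⟨_, ⟨0, ⟨le_refl 0, by positivity⟩, rfl⟩⟩
  have hAbd : BddAbove A := by
    refine ⟨‖x‖ + ‖y‖, ?_⟩
    rintro a ⟨Φ, hΦ, rfl⟩
    simp only [Set.mem_setOf_eq] at hΦ
    have hx : |Φ x| ≤ ‖x‖ := by
      calc |Φ x| = ‖Φ x‖ := rfl
        _ ≤ ‖Φ‖ * ‖x‖ := Φ.le_opNorm x
        _ ≤ 1 * ‖x‖ := by gcongr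
        _ = ‖x‖ := one_mul _
    have hy : |Φ y| ≤ ‖y‖ := by
      calc |Φ y| = ‖Φ y‖ := rfl
        _ ≤ ‖Φ‖ * ‖y‖ := Φ.le_opNorm y
        _ ≤ 1 * ‖y‖ := by gcongr
        _ = ‖y‖ := one_mul _
    have h1 : Real.sqrt (Φ x ^ 2 + Φ y ^ 2) ≤ Real.sqrt ((‖x‖ + ‖y‖) ^ 2) := by
      apply Real.sqrt_le_sqrt
      nlinarith [abs_nonneg (Φ x), abs_nonneg (Φ y), sq_abs (Φ x), sq_abs (Φ y),
        norm_nonneg x, norm_nonneg y]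
    calc Real.sqrt (Φ x ^ 2 + Φ y ^ 2) ≤ Real.sqrt ((‖x‖ + ‖y‖) ^ 2) := h1
      _ = ‖x‖ + ‖y‖ := Real.sqrt_sq (by positivity)
  have hBbd : BddAbove B := by
    refine ⟨‖x‖ + ‖y‖, ?_⟩
    rintro b ⟨t, ht, rfl⟩
    calc ‖Real.cos t • x + Real.sin t • y‖ ≤ ‖Real.cos t • x‖ + ‖Real.sin t • y‖ :=
          norm_add_le _ _
      _ = |Real.cos t| * ‖x‖ + |Real.sin t| * ‖y‖ := by rw [norm_smul, norm_smul]; rfl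
      _ ≤ 1 * ‖x‖ + 1 * ‖y‖ := by
          gcongr <;> first
            | exact norm_nonneg _
            | exact Real.abs_cos_le_one t
            | exact Real.abs_sin_le_one t
      _ = ‖x‖ + ‖y‖ := by ring
  apply le_antisymm
  · apply csSup_le hAne
    rintro a ⟨Φ, hΦ, rfl⟩
    simp only [Set.mem_setOf_eq] at hΦ
    show Real.sqrt (Φ x ^ 2 + Φ y ^ 2) ≤ sSup B
    set z : ℂ := ⟨Φ x, Φ y⟩ with hz
    have habs : ‖z‖ = Real.sqrt (Φ x ^ 2 + Φ y ^ 2) := by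
      rw [Complex.norm_def, Complex.normSq_apply]
      norm_num [hz]
      ring_nf
    rcases eq_or_ne z 0 with h0 | h0
    · have : Real.sqrt (Φ x ^ 2 + Φ y ^ 2) = 0 := by rw [← habs, h0, norm_zero]
      rw [this]
      have : ‖Real.cos 0 • x + Real.sin 0 • y‖ ∈ B := ⟨0, ⟨le_refl 0, by positivity⟩, rfl⟩
      exact le_trans (norm_nonneg _) (le_csSup hBbd this)
    · have hrpos : 0 < ‖z‖ := norm_pos_iff.mpr h0
      set t₀ := Complex.arg z with ht₀
      have hcos : Real.cos t₀ = Φ x / ‖z‖ := Complex.cos_arg h0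
      have hsin : Real.sin t₀ = Φ y / ‖z‖ := Complex.sin_arg z
      set t : ℝ := if 0 ≤ t₀ then t₀ else t₀ + 2 * Real.pi with htdef
      have harg := Complex.arg_mem_Ioc z
      have htmem : t ∈ Set.Icc 0 (2 * Real.pi) := by
        rw [htdef]
        rcases le_or_gt 0 t₀ with h | h
        · rw [if_pos h]
          exact ⟨h, by nlinarith [harg.2]⟩
        · rw [if_neg (not_le.mpr h)]
          constructor
          · nlinarith [harg.1]
          · nlinarith
      have hcost : Real.cos t = Real.cos t₀ := by
        rw [htdef]; split
        · rfl
        · rw [Real.cos_add_two_pi]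
      have hsint : Real.sin t = Real.sin t₀ := by
        rw [htdef]; split
        · rfl
        · rw [Real.sin_add_two_pi]
      have key : Real.sqrt (Φ x ^ 2 + Φ y ^ 2) = Φ (Real.cos t • x + Real.sin t • y) := by
        rw [map_add, map_smul, map_smul, smul_eq_mul, smul_eq_mul, hcost, hsint, hcos, hsin,
          ← habs]
        have h2 : ‖z‖ ^ 2 = Φ x ^ 2 + Φ y ^ 2 := by
          rw [Complex.sq_norm, Complex.normSq_apply]; norm_num [hz]; ring
        field_simp
        nlinarith [h2]
      rw [key]
      calc Φ (Real.cos t • x + Real.sin t • y) ≤ |Φ (Real.cos t • x + Real.sin t • y)| :=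
            le_abs_self _
        _ ≤ ‖Φ‖ * ‖Real.cos t • x + Real.sin t • y‖ := Φ.le_opNorm _
        _ ≤ 1 * ‖Real.cos t • x + Real.sin t • y‖ := by gcongr
        _ = ‖Real.cos t • x + Real.sin t • y‖ := one_mul _
        _ ≤ sSup B := le_csSup hBbd ⟨t, htmem, rfl⟩
  · apply csSup_le hBne
    rintro b ⟨t, ht, rfl⟩
    show ‖Real.cos t • x + Real.sin t • y‖ ≤ sSup A
    set v := Real.cos t • x + Real.sin t • y with hv
    rcases eq_or_ne v 0 with h0 | h0
    · rw [h0, norm_zero]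
      have : Real.sqrt ((0 : X →L[ℝ] ℝ) x ^ 2 + (0 : X →L[ℝ] ℝ) y ^ 2) ∈ A :=
        ⟨0, by simp, rfl⟩
      exact le_trans (by simp) (le_csSup hAbd this)
    · obtain ⟨g, hg1, hgv⟩ := exists_dual_vector ℝ v (norm_ne_zero_iff.mpr h0)
      have hgv' : g v = ‖v‖ := by exact_mod_cast hgv
      have hmem : Real.sqrt (g x ^ 2 + g y ^ 2) ∈ A := ⟨g, le_of_eq hg1, rfl⟩
      have hle : ‖v‖ ≤ Real.sqrt (g x ^ 2 + g y ^ 2) := by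
        rw [← hgv', hv, map_add, map_smul, map_smul, smul_eq_mul, smul_eq_mul]
        have hs : Real.cos t ^ 2 + Real.sin t ^ 2 = 1 := Real.cos_sq_add_sin_sq t
        have h1 : Real.cos t * g x + Real.sin t * g y ≤
            |Real.cos t * g x + Real.sin t * g y| := le_abs_self _
        have h2 : |Real.cos t * g x + Real.sin t * g y| =
            Real.sqrt ((Real.cos t * g x + Real.sin t * g y) ^ 2) :=
          (Real.sqrt_sq_eq_abs _).symm
        have h3 : (Real.cos t * g x + Real.sin t * g y) ^ 2 ≤ g x ^ 2 + g y ^ 2 := by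
          nlinarith [sq_nonneg (Real.cos t * g y - Real.sin t * g x)]
        calc Real.cos t * g x + Real.sin t * g y
            ≤ Real.sqrt ((Real.cos t * g x + Real.sin t * g y) ^ 2) := by rw [← h2]; exact h1
          _ ≤ Real.sqrt (g x ^ 2 + g y ^ 2) := Real.sqrt_le_sqrt h3
      exact le_trans hle (le_csSup hAbd hmem)
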